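/- Let S be a Cu-semigroup. Then a submonoid T ⊆ S is a sub-Cu-semigroup if and only if T is closed under suprema of increasing sequences and for every x' ∈ S and x ∈ T with x' ≪ x there exists y ∈ T with x' ≪ y ≪ x. -/

import Mathlib

def WayBelow {S : Type*} [PartialOrder S] (x y : S) : Prop :=
  ∀ f : ℕ → S, Monotone f → ∀ z : S, IsLUB (Set.range f) z → y ≤ z → ∃ n, x ≤ f n

class CuSemigroup (S : Type*) [AddCommMonoid S] [PartialOrder S] : Prop where
  zero_le : ∀ x : S, 0 ≤ x
  add_le_add_left : ∀ x y : S, x ≤ y → ∀ z : S, z + x ≤ z + y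
  exists_sup : ∀ f : ℕ → S, Monotone f → ∃ z : S, IsLUB (Set.range f) z
  exists_wb_seq : ∀ x : S, ∃ f : ℕ → S, (∀ n, WayBelow (f n) (f (n + 1))) ∧ IsLUB (Set.range f) x
  wb_add : ∀ x' x y' y : S, WayBelow x' x → WayBelow y' y → WayBelow (x' + y') (x + y)
  sup_add : ∀ f g : ℕ → S, Monotone f → Monotone g → ∀ a b : S,
    IsLUB (Set.range f) a → IsLUB (Set.range g) b →
    IsLUB (Set.range fun n => f n + g n) (a + b)

def cuDerivedSet {S : Type*} [PartialOrder S] (T : Set S) : Set S :=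
  { s | ∃ f : ℕ → S, (∀ n, f n ∈ T) ∧ (∀ n, WayBelow (f n) (f (n + 1))) ∧ IsLUB (Set.range f) s }

def SupClosedSet {S : Type*} [PartialOrder S] (T : Set S) : Prop :=
  ∀ f : ℕ → S, Monotone f → (∀ n, f n ∈ T) → ∀ z : S, IsLUB (Set.range f) z → z ∈ T

def IsSubCu {S : Type*} [AddCommMonoid S] [PartialOrder S] (T : AddSubmonoid S) : Prop :=
  CuSemigroup T ∧
  (∀ f : ℕ → T, Monotone f → ∀ z : T, IsLUB (Set.range f) z →
    IsLUB (Set.range fun n => (f n : S)) (z : S)) ∧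
  (∀ x y : T, WayBelow x y → WayBelow (x : S) (y : S))

section Lemmas

variable {S : Type*} [PartialOrder S]

lemma wayBelow_le {x y : S} (h : WayBelow x y) : x ≤ y := by
  obtain ⟨n, hn⟩ := h (fun _ => y) monotone_const y
    (by rw [Set.range_const]; exact isLUB_singleton) le_rfl
  exact hn

lemma wayBelow_mono {x x' y y' : S} (hx : x ≤ x') (h : WayBelow x' y) (hy : y ≤ y') :
    WayBelow x y' := fun f hf z hz hle => by
  obtain ⟨n, hn⟩ := h f hf z hz (hy.trans hle)
  exact ⟨n, hx.trans hn⟩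

end Lemmas

lemma zero_wayBelow {S : Type*} [AddCommMonoid S] [PartialOrder S] [CuSemigroup S] (x : S) :
    WayBelow 0 x := fun f _ _ _ _ => ⟨0, CuSemigroup.zero_le _⟩

section Sub

variable {S : Type*} [AddCommMonoid S] [PartialOrder S] {T : AddSubmonoid S}

lemma coeMono {f : ℕ → T} (hf : Monotone f) : Monotone fun n => (f n : S) :=
  fun a b h => Subtype.coe_le_coe.2 (hf h)

lemma isLUB_subtype {f : ℕ → T} {z : S}
    (hz : IsLUB (Set.range fun n => (f n : S)) z) (hzT : z ∈ T) :
    IsLUB (Set.range f) (⟨z, hzT⟩ : T) := by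
  constructor
  · rintro _ ⟨n, rfl⟩
    exact Subtype.coe_le_coe.1 (hz.1 ⟨n, rfl⟩)
  · intro u hu
    refine Subtype.coe_le_coe.1 (hz.2 ?_)
    rintro _ ⟨n, rfl⟩
    exact Subtype.coe_le_coe.2 (hu ⟨n, rfl⟩)

variable [CuSemigroup S]

lemma subLUB (hsc : SupClosedSet (T : Set S)) :
    ∀ f : ℕ → T, Monotone f → ∀ z : T, IsLUB (Set.range f) z →
      IsLUB (Set.range fun n => (f n : S)) (z : S) := by
  intro f hf z hz
  obtain ⟨w, hw⟩ := CuSemigroup.exists_sup (fun n => (f n : S)) (coeMono hf)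
  have hwT : w ∈ T := hsc _ (coeMono hf) (fun n => (f n).2) w hw
  have : z = ⟨w, hwT⟩ := hz.unique (isLUB_subtype hw hwT)
  rw [this]; exact hw

lemma wb_of_wbS (hsc : SupClosedSet (T : Set S)) {a b : T}
    (h : WayBelow (a : S) (b : S)) : WayBelow a b := by
  intro f hf z hz hbz
  obtain ⟨n, hn⟩ := h (fun n => (f n : S)) (coeMono hf) z (subLUB hsc f hf z hz)
    (Subtype.coe_le_coe.2 hbz)
  exact ⟨n, Subtype.coe_le_coe.1 hn⟩

lemma exists_wb_seq_mem
    (hint : ∀ x' : S, ∀ x ∈ T, WayBelow x' x → ∃ y ∈ T, WayBelow x' y ∧ WayBelow y x)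
    {x : S} (hx : x ∈ T) :
    ∃ g : ℕ → S, (∀ n, g n ∈ T) ∧ (∀ n, WayBelow (g n) (g (n + 1))) ∧
      IsLUB (Set.range g) x := by
  obtain ⟨f, hf, hlub⟩ := CuSemigroup.exists_wb_seq x
  have fmono : Monotone f := monotone_nat_of_le_succ fun n => wayBelow_le (hf n)
  have fwbx : ∀ n, WayBelow (f n) x := fun n =>
    wayBelow_mono le_rfl (hf n) (hlub.1 ⟨n + 1, rfl⟩)
  -- step lemma
  have step : ∀ (y : {p : S // p ∈ T ∧ WayBelow p x}) (n : ℕ),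
      ∃ y' : {p : S // p ∈ T ∧ WayBelow p x}, WayBelow (y : S) (y' : S) ∧ f n ≤ (y' : S) := by
    rintro ⟨y, hyT, hywb⟩ n
    obtain ⟨m, hm⟩ := hywb f fmono x hlub le_rfl
    set k := max (m + 1) n with hk
    obtain ⟨y', hy'T, hfk, hy'x⟩ := hint (f k) x hx (fwbx k)
    refine ⟨⟨y', hy'T, hy'x⟩, ?_, ?_⟩
    · exact wayBelow_mono hm (hf m)
        ((fmono (le_max_left (m + 1) n)).trans (wayBelow_le hfk))
    · exact (fmono (le_max_right (m + 1) n)).trans (wayBelow_le hfk)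
  choose F hF1 hF2 using step
  let G : ℕ → {p : S // p ∈ T ∧ WayBelow p x} := fun n =>
    Nat.rec ⟨0, T.zero_mem, zero_wayBelow x⟩ (fun n ih => F ih (n + 1)) n
  have hGsucc : ∀ n, G (n + 1) = F (G n) (n + 1) := fun n => rfl
  refine ⟨fun n => (G n).1, ?_, fun n => ?_, ?_, ?_⟩
  · exact fun n => (G n).2.1
  · have h := hF1 (G n) (n + 1)
    rw [← hGsucc n] at h
    exact h
  · rintro _ ⟨n, rfl⟩
    exact wayBelow_le (G n).2.2
  · intro u hu
    refine hlub.2 ?_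
    rintro _ ⟨n, rfl⟩
    have h1 : f (n + 1) ≤ (G (n + 1) : S) := by rw [hGsucc n]; exact hF2 (G n) (n + 1)
    exact (fmono (Nat.le_succ n)).trans (h1.trans (hu ⟨n + 1, rfl⟩))

lemma wbS_of_wb (hsc : SupClosedSet (T : Set S))
    (hint : ∀ x' : S, ∀ x ∈ T, WayBelow x' x → ∃ y ∈ T, WayBelow x' y ∧ WayBelow y x)
    {a b : T} (h : WayBelow a b) : WayBelow (a : S) (b : S) := by
  obtain ⟨g, hgT, hgwb, hglub⟩ := exists_wb_seq_mem hint b.2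
  set G : ℕ → T := fun n => ⟨g n, hgT n⟩ with hG
  have Gmono : Monotone G := monotone_nat_of_le_succ fun n =>
    Subtype.coe_le_coe.1 (wayBelow_le (hgwb n))
  have hlubT : IsLUB (Set.range G) b := by
    have := isLUB_subtype (f := G) (z := (b : S)) hglub b.2
    simpa using this
  obtain ⟨n, hn⟩ := h G Gmono b hlubT le_rfl
  exact wayBelow_mono (Subtype.coe_le_coe.2 hn) (hgwb n) (hglub.1 ⟨n + 1, rfl⟩)

end Sub

theorem isSubCu_iff_supClosed_interpolation {S : Type*} [AddCommMonoid S] [PartialOrder S]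
    [CuSemigroup S] (T : AddSubmonoid S) :
    IsSubCu T ↔
      (SupClosedSet (T : Set S) ∧
        ∀ x' : S, ∀ x ∈ T, WayBelow x' x → ∃ y ∈ T, WayBelow x' y ∧ WayBelow y x) := by
  constructor
  · rintro ⟨hCu, hsup, hwb⟩
    constructor
    · -- SupClosedSet
      intro f hf hmem z hz
      set F : ℕ → T := fun n => ⟨f n, hmem n⟩ with hF
      have Fmono : Monotone F := fun a b h => Subtype.coe_le_coe.2 (hf h)
      obtain ⟨w, hw⟩ := hCu.exists_sup F Fmono
      have : IsLUB (Set.range f) (w : S) := hsup F Fmono w hw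
      rw [hz.unique this]
      exact w.2
    · -- interpolation
      intro x' x hx hwbx
      obtain ⟨g, hg, hglub⟩ := hCu.exists_wb_seq (⟨x, hx⟩ : T)
      have gmono : Monotone g := monotone_nat_of_le_succ fun n => wayBelow_le (hg n)
      have hglubS : IsLUB (Set.range fun n => (g n : S)) x := hsup g gmono ⟨x, hx⟩ hglub
      obtain ⟨n, hn⟩ := hwbx (fun n => (g n : S)) (coeMono gmono) x hglubS le_rfl
      refine ⟨(g (n + 1) : S), (g (n + 1)).2, ?_, ?_⟩
      · exact wayBelow_mono hn (hwb _ _ (hg n)) le_rfl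
      · exact wayBelow_mono le_rfl (hwb _ _ (hg (n + 1)))
          (Subtype.coe_le_coe.2 (hglub.1 ⟨n + 2, rfl⟩))
  · rintro ⟨hsc, hint⟩
    have hwbS : ∀ x y : T, WayBelow x y → WayBelow (x : S) (y : S) :=
      fun x y h => wbS_of_wb hsc hint h
    refine ⟨?_, subLUB hsc, hwbS⟩
    constructor
    · -- zero_le
      intro x
      exact Subtype.coe_le_coe.1 (by simpa using CuSemigroup.zero_le (x : S))
    · -- add_le_add_left
      intro x y h z
      refine Subtype.coe_le_coe.1 ?_
      push_cast
      exact CuSemigroup.add_le_add_left (x : S) (y : S) (Subtype.coe_le_coe.2 h) (z : S)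
    · -- exists_sup
      intro f hf
      obtain ⟨z, hz⟩ := CuSemigroup.exists_sup (fun n => (f n : S)) (coeMono hf)
      have hzT : z ∈ T := hsc _ (coeMono hf) (fun n => (f n).2) z hz
      exact ⟨⟨z, hzT⟩, isLUB_subtype hz hzT⟩
    · -- exists_wb_seq
      intro x
      obtain ⟨g, hgT, hgwb, hglub⟩ := exists_wb_seq_mem hint x.2
      refine ⟨fun n => ⟨g n, hgT n⟩, fun n => wb_of_wbS hsc (hgwb n), ?_⟩
      have := isLUB_subtype (f := fun n => (⟨g n, hgT n⟩ : T)) (z := (x : S)) hglub x.2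
      simpa using this
    · -- wb_add
      intro x' x y' y h1 h2
      have := CuSemigroup.wb_add (x' : S) (x : S) (y' : S) (y : S)
        (hwbS _ _ h1) (hwbS _ _ h2)
      refine wb_of_wbS hsc ?_
      push_cast
      exact this
    · -- sup_add
      intro f g hf hg a b ha hb
      have hS := CuSemigroup.sup_add (fun n => (f n : S)) (fun n => (g n : S))
        (coeMono hf) (coeMono hg) (a : S) (b : S)
        (subLUB hsc f hf a ha) (subLUB hsc g hg b hb)
      have key : IsLUB (Set.range fun n => ((f n + g n : T) : S)) ((a + b : T) : S) := by
        push_cast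
        exact hS
      have := isLUB_subtype (f := fun n => f n + g n) key (a + b).2
      exact this
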